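/- arXiv:math/0405100 — 6 statements merged into one kernel-verified Lean document; each statement's English description precedes it below -/
import Mathlib

section
/- F is the free algebra of the variety V on the generators x₁, x₂, …: for every algebra M = (M, *_M, p_M, 0_M) with a binary operation *_M and constants p_M, 0_M satisfying the four laws 0 * x = x * 0 = 0, (x * y) * z = (x * z) * y, x * (y * z) = 0, (x * y) * y = 0, and for every function g : {x₁, x₂, …} → M, there exists a unique map φ : F → M with φ(a * b) = φ(a) *_M φ(b) for all a, b ∈ F, φ(0) = 0_M, φ(p) = p_M, and φ(xᵢ) = g(xᵢ) for all i. -/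
/-- Letters: `none` is the distinguished letter `p`, `some i` is the generator letter `xᵢ`. -/
abbrev Letter := Option ℕ

/-- The carrier of the free algebra: `0`, the letters, and the words
(pairs of a letter and a finite nonempty set of letters). -/
inductive F : Type
  | zero : F
  | letter : Letter → F
  | word : Letter → {Y : Finset Letter // Y.Nonempty} → F

namespace F

/-- The binary operation `*` on `F`. -/
def mul : F → F → F
  | zero, _ => zero
  | _, zero => zero
  | _, word _ _ => zero
  | letter x, letter y => word x ⟨{y}, Finset.singleton_nonempty y⟩
  | word x Y, letter y =>
      if y ∈ Y.1 then zero
      else word x ⟨insert y Y.1, Finset.insert_nonempty y Y.1⟩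

/-- The distinguished letter `p` as an element of `F`. -/
def p : F := letter none

/-- The generator letter `xᵢ` as an element of `F`. -/
def x (i : ℕ) : F := letter (some i)

end F

section aux

variable {M : Type*} (m : M → M → M) (pM zM : M) (g : ℕ → M)

/-- Interpretation of a letter in `M`. -/
def interpL (l : Letter) : M := l.elim pM (g)

end aux

/-- `F` is the free algebra on the generators `x₁, x₂, …` in the variety `V`. -/
theorem stmt_2 {M : Type*} (m : M → M → M) (pM zM : M)
    (law1 : ∀ a : M, m zM a = zM) (law1' : ∀ a : M, m a zM = zM)
    (law2 : ∀ a b c : M, m (m a b) c = m (m a c) b)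
    (law3 : ∀ a b c : M, m a (m b c) = zM)
    (law4 : ∀ a b : M, m (m a b) b = zM)
    (g : ℕ → M) :
    ∃! φ : F → M,
      (∀ a b : F, φ (F.mul a b) = m (φ a) (φ b)) ∧
      φ F.zero = zM ∧ φ F.p = pM ∧ (∀ i : ℕ, φ (F.x i) = g i) := by
  set L : Letter → M := fun l => l.elim pM g with hL
  haveI : LeftCommutative (fun (y : Letter) (acc : M) => m acc (L y)) :=
    ⟨fun a b x => law2 x (L b) (L a)⟩
  set f : Letter → M → M := fun y acc => m acc (L y) with hf
  -- the candidate homomorphism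
  set φ : F → M := fun a => match a with
    | F.zero => zM
    | F.letter l => L l
    | F.word x Y => Multiset.foldr f (L x) Y.1.val
    with hφ
  have fold_cons : ∀ (b : M) (y : Letter) (s : Multiset Letter),
      Multiset.foldr f b (y ::ₘ s) = m (Multiset.foldr f b s) (L y) := by
    intro b y s; rw [Multiset.foldr_cons]
  have hword : ∀ (x : Letter) (Y : {Y : Finset Letter // Y.Nonempty}),
      ∃ u v, φ (F.word x Y) = m u v := by
    intro x Y
    obtain ⟨y, hy⟩ := Y.2
    obtain ⟨s, hs⟩ := Multiset.exists_cons_of_mem (Finset.mem_def.mp hy)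
    refine ⟨Multiset.foldr f (L x) s, L y, ?_⟩
    simp only [hφ, hs, fold_cons]
  have hhom : ∀ a b : F, φ (F.mul a b) = m (φ a) (φ b) := by
    intro a b
    cases a with
    | zero => cases b <;> simp [F.mul, hφ, law1]
    | letter x =>
      cases b with
      | zero => simp [F.mul, hφ, law1']
      | letter y =>
        show Multiset.foldr f (L x) ({y} : Finset Letter).val = m (L x) (L y)
        simp [fold_cons, hf]
      | word y Y =>
        show zM = m (L x) (φ (F.word y Y))
        obtain ⟨u, v, huv⟩ := hword y Y
        rw [huv, law3]
    | word x Y =>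
      cases b with
      | zero => simp [F.mul, hφ, law1']
      | letter y =>
        show φ (if y ∈ Y.1 then F.zero else
            F.word x ⟨insert y Y.1, Finset.insert_nonempty y Y.1⟩)
          = m (φ (F.word x Y)) (L y)
        by_cases hy : y ∈ Y.1
        · obtain ⟨s, hs⟩ := Multiset.exists_cons_of_mem (Finset.mem_def.mp hy)
          simp only [if_pos hy]
          show zM = m (Multiset.foldr f (L x) Y.1.val) (L y)
          rw [hs, fold_cons, law4]
        · simp only [if_neg hy]
          show Multiset.foldr f (L x) (insert y Y.1).val
            = m (Multiset.foldr f (L x) Y.1.val) (L y)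
          rw [Finset.insert_val_of_notMem hy, fold_cons]
      | word y Z =>
        show zM = m (φ (F.word x Y)) (φ (F.word y Z))
        obtain ⟨u, v, huv⟩ := hword y Z
        rw [huv, law3]
  refine ⟨φ, ⟨hhom, rfl, rfl, fun i => rfl⟩, ?_⟩
  rintro ψ ⟨hψhom, hψ0, hψp, hψx⟩
  funext a
  cases a with
  | zero => exact hψ0
  | letter l =>
    cases l with
    | none => exact hψp
    | some i => exact hψx i
  | word x Y =>
    -- key: ψ and φ agree on letters
    have hlet : ∀ l : Letter, ψ (F.letter l) = L l := by
      rintro (_ | i)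
      · exact hψp
      · exact hψx i
    obtain ⟨Yset, hYne⟩ := Y
    induction Yset using Finset.induction_on with
    | empty => exact absurd hYne (by simp)
    | @insert y s hy ih =>
      rcases s.eq_empty_or_nonempty with rfl | hs
      · have : F.word x ⟨insert y ∅, hYne⟩ = F.mul (F.letter x) (F.letter y) := by
          simp [F.mul]
        rw [this, hψhom, hhom, hlet x, hlet y]
      · have hmul : F.mul (F.word x ⟨s, hs⟩) (F.letter y)
            = F.word x ⟨insert y s, hYne⟩ := by
          simp [F.mul, hy]
        rw [← hmul, hψhom, hhom, ih hs, hlet y]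
end

section
/- For every natural number n, the subalgebra of F generated by {x₁, …, xₙ} (the smallest subset of F containing 0, p, x₁, …, xₙ and closed under *) has exactly 1 + (n+1)·2^(n+1) elements. -/
/-- Membership in the subalgebra of `F` generated by `G`: the smallest subset of `F`
containing `0`, `p` and `G` that is closed under `*`. -/
inductive Gen (G : Set F) : F → Prop
  | zero : Gen G F.zero
  | p : Gen G F.p
  | base {a : F} : a ∈ G → Gen G a
  | mul {a b : F} : Gen G a → Gen G b → Gen G (F.mul a b)

deriving instance DecidableEq for F

/-- The letters available with `n` generators. -/
def L0 (n : ℕ) : Finset Letter := insert none ((Finset.range n).image some)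

lemma card_L0 (n : ℕ) : (L0 n).card = n + 1 := by
  rw [L0, Finset.card_insert_of_notMem (by simp),
    Finset.card_image_of_injective _ (Option.some_injective _), Finset.card_range]

/-- The nonempty subsets of `L0 n`. -/
def P0 (n : ℕ) : Finset (Finset Letter) := (L0 n).powerset.erase ∅

lemma P0_nonempty {n : ℕ} {Y : Finset Letter} (h : Y ∈ P0 n) : Y.Nonempty :=
  Finset.nonempty_of_ne_empty (Finset.ne_of_mem_erase h)

lemma card_P0 (n : ℕ) : (P0 n).card = 2 ^ (n + 1) - 1 := by
  rw [P0, Finset.card_erase_of_mem (by simp), Finset.card_powerset, card_L0]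

/-- The word part of the subalgebra. -/
def WS (n : ℕ) : Finset F :=
  ((L0 n) ×ˢ (P0 n)).attach.image
    (fun q => F.word q.1.1 ⟨q.1.2, P0_nonempty (Finset.mem_product.mp q.2).2⟩)

/-- The subalgebra as a finset. -/
def S (n : ℕ) : Finset F := {F.zero} ∪ (L0 n).image F.letter ∪ WS n

lemma mem_WS {n : ℕ} {a : F} :
    a ∈ WS n ↔ ∃ ℓ ∈ L0 n, ∃ Y : Finset Letter, ∃ hY : Y.Nonempty,
      Y ⊆ L0 n ∧ a = F.word ℓ ⟨Y, hY⟩ := by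
  constructor
  · rintro h
    rw [WS, Finset.mem_image] at h
    obtain ⟨⟨⟨ℓ, Y⟩, hq⟩, -, rfl⟩ := h
    rw [Finset.mem_product] at hq
    exact ⟨ℓ, hq.1, Y, P0_nonempty hq.2, Finset.mem_powerset.mp (Finset.mem_of_mem_erase hq.2), rfl⟩
  · rintro ⟨ℓ, hℓ, Y, hY, hsub, rfl⟩
    rw [WS, Finset.mem_image]
    have hq : (ℓ, Y) ∈ (L0 n) ×ˢ (P0 n) := by
      rw [Finset.mem_product]
      exact ⟨hℓ, Finset.mem_erase.mpr ⟨hY.ne_empty, Finset.mem_powerset.mpr hsub⟩⟩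
    exact ⟨⟨(ℓ, Y), hq⟩, Finset.mem_attach _ _, rfl⟩

lemma mem_S {n : ℕ} {a : F} :
    a ∈ S n ↔ a = F.zero ∨ (∃ ℓ ∈ L0 n, a = F.letter ℓ) ∨
      (∃ ℓ ∈ L0 n, ∃ Y : Finset Letter, ∃ hY : Y.Nonempty,
        Y ⊆ L0 n ∧ a = F.word ℓ ⟨Y, hY⟩) := by
  rw [S, Finset.mem_union, Finset.mem_union, Finset.mem_singleton, Finset.mem_image, mem_WS]
  constructor
  · rintro ((h | ⟨ℓ, hℓ, rfl⟩) | h)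
    · exact Or.inl h
    · exact Or.inr (Or.inl ⟨ℓ, hℓ, rfl⟩)
    · exact Or.inr (Or.inr h)
  · rintro (h | ⟨ℓ, hℓ, rfl⟩ | h)
    · exact Or.inl (Or.inl h)
    · exact Or.inl (Or.inr ⟨ℓ, hℓ, rfl⟩)
    · exact Or.inr h

lemma mul_word_letter (x : Letter) (Y : {Y : Finset Letter // Y.Nonempty}) (y : Letter) :
    F.mul (F.word x Y) (F.letter y) =
      if y ∈ Y.1 then F.zero
      else F.word x ⟨insert y Y.1, Finset.insert_nonempty y Y.1⟩ := rfl

lemma S_closed {n : ℕ} {a b : F} (ha : a ∈ S n) (hb : b ∈ S n) : F.mul a b ∈ S n := by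
  rw [mem_S] at ha hb ⊢
  rcases ha with rfl | ⟨ℓ, hℓ, rfl⟩ | ⟨ℓ, hℓ, Y, hY, hsub, rfl⟩
  · rcases hb with rfl | ⟨m, hm, rfl⟩ | ⟨m, hm, Z, hZ, hZsub, rfl⟩ <;> exact Or.inl rfl
  · rcases hb with rfl | ⟨m, hm, rfl⟩ | ⟨m, hm, Z, hZ, hZsub, rfl⟩
    · exact Or.inl rfl
    · exact Or.inr (Or.inr ⟨ℓ, hℓ, {m}, Finset.singleton_nonempty m,
        Finset.singleton_subset_iff.mpr hm, rfl⟩)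
    · exact Or.inl rfl
  · rcases hb with rfl | ⟨m, hm, rfl⟩ | ⟨m, hm, Z, hZ, hZsub, rfl⟩
    · exact Or.inl rfl
    · rw [mul_word_letter]
      by_cases hmY : m ∈ Y
      · rw [if_pos hmY]; exact Or.inl rfl
      · rw [if_neg hmY]
        exact Or.inr (Or.inr ⟨ℓ, hℓ, insert m Y, Finset.insert_nonempty m Y,
          Finset.insert_subset hm hsub, rfl⟩)
    · exact Or.inl rfl

lemma gen_letter {n : ℕ} {ℓ : Letter} (h : ℓ ∈ L0 n) :
    Gen {f : F | ∃ i < n, f = F.x i} (F.letter ℓ) := by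
  rw [L0, Finset.mem_insert] at h
  rcases h with rfl | h
  · exact Gen.p
  · rw [Finset.mem_image] at h
    obtain ⟨i, hi, rfl⟩ := h
    exact Gen.base ⟨i, Finset.mem_range.mp hi, rfl⟩

lemma gen_word {n : ℕ} {ℓ : Letter} (hℓ : ℓ ∈ L0 n) (Y : Finset Letter)
    (hY : Y.Nonempty) (hsub : Y ⊆ L0 n) :
    Gen {f : F | ∃ i < n, f = F.x i} (F.word ℓ ⟨Y, hY⟩) := by
  induction Y using Finset.induction_on with
  | empty => exact absurd rfl hY.ne_empty
  | @insert y Z hyZ ih =>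
    rcases Z.eq_empty_or_nonempty with rfl | hZ
    · have he : (⟨insert y ∅, hY⟩ : {Y : Finset Letter // Y.Nonempty}) =
          ⟨{y}, Finset.singleton_nonempty y⟩ := Subtype.ext (by simp)
      rw [he]
      exact Gen.mul (gen_letter hℓ) (gen_letter (hsub (Finset.mem_insert_self y ∅)))
    · have he : F.word ℓ ⟨insert y Z, hY⟩ =
          F.mul (F.word ℓ ⟨Z, hZ⟩) (F.letter y) := by
        rw [mul_word_letter, if_neg hyZ]
      rw [he]
      exact Gen.mul (ih hZ (fun z hz => hsub (Finset.mem_insert_of_mem hz)))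
        (gen_letter (hsub (Finset.mem_insert_self y Z)))

lemma gen_eq_S (n : ℕ) :
    {a : F | Gen {f : F | ∃ i < n, f = F.x i} a} = ↑(S n) := by
  ext a
  simp only [Set.mem_setOf_eq, Finset.coe_sort_coe, Finset.mem_coe]
  constructor
  · intro h
    induction h with
    | zero => exact mem_S.mpr (Or.inl rfl)
    | p => exact mem_S.mpr (Or.inr (Or.inl ⟨none, Finset.mem_insert_self _ _, rfl⟩))
    | base hb =>
      obtain ⟨i, hi, rfl⟩ := hb
      refine mem_S.mpr (Or.inr (Or.inl ⟨some i, ?_, rfl⟩))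
      rw [L0, Finset.mem_insert]
      exact Or.inr (Finset.mem_image_of_mem _ (Finset.mem_range.mpr hi))
    | mul _ _ iha ihb => exact S_closed iha ihb
  · intro h
    rcases mem_S.mp h with rfl | ⟨ℓ, hℓ, rfl⟩ | ⟨ℓ, hℓ, Y, hY, hsub, rfl⟩
    · exact Gen.zero
    · exact gen_letter hℓ
    · exact gen_word hℓ Y hY hsub

lemma card_WS (n : ℕ) : (WS n).card = (n + 1) * (2 ^ (n + 1) - 1) := by
  rw [WS, Finset.card_image_of_injective, Finset.card_attach, Finset.card_product,
    card_L0, card_P0]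
  rintro ⟨⟨ℓ, Y⟩, hq⟩ ⟨⟨m, Z⟩, hr⟩ h
  simp only [F.word.injEq, Subtype.mk.injEq] at h
  simp [h.1, h.2]

lemma card_S (n : ℕ) : (S n).card = 1 + (n + 1) * 2 ^ (n + 1) := by
  rw [S]
  rw [Finset.card_union_of_disjoint, Finset.card_union_of_disjoint, Finset.card_singleton,
    Finset.card_image_of_injective _ (fun a b h => F.letter.inj h), card_L0, card_WS]
  · have h1 : 1 ≤ 2 ^ (n + 1) := Nat.one_le_two_pow
    have h2 : 2 ^ (n + 1) = (2 ^ (n + 1) - 1) + 1 := (Nat.succ_pred_eq_of_pos h1).symm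
    conv_rhs => rw [h2]
    ring
  · rw [Finset.disjoint_left]
    rintro a ha hb
    rw [Finset.mem_singleton] at ha
    rw [Finset.mem_image] at hb
    obtain ⟨ℓ, -, hℓ⟩ := hb
    rw [ha] at hℓ
    exact F.noConfusion hℓ
  · rw [Finset.disjoint_left]
    rintro a ha hb
    rcases mem_WS.mp hb with ⟨ℓ, -, Y, hY, -, rfl⟩
    rw [Finset.mem_union, Finset.mem_singleton, Finset.mem_image] at ha
    rcases ha with ha | ⟨m, -, hm⟩
    · exact F.noConfusion ha
    · exact F.noConfusion hm

/-- The subalgebra of `F` generated by `{x₁, …, xₙ}` has exactly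
`1 + (n+1)·2^(n+1)` elements. -/
theorem stmt_3 (n : ℕ) :
    {a : F | Gen {f : F | ∃ i < n, f = F.x i} a}.ncard = 1 + (n + 1) * 2 ^ (n + 1) := by
  rw [gen_eq_S, Set.ncard_coe_finset, card_S]
end

section
/- The variety V is locally finite: for every algebra M = (M, *_M, p_M, 0_M) with a binary operation *_M and constants p_M, 0_M satisfying the four laws 0 * x = x * 0 = 0, (x * y) * z = (x * z) * y, x * (y * z) = 0, (x * y) * y = 0, and every n-element subset G ⊆ M, the subalgebra of M generated by G (the smallest subset containing 0_M, p_M, and G and closed under *_M) is finite, with at most 1 + (n+1)·2^(n+1) elements. -/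
/-- Membership in the subalgebra of `(M, m, pM, zM)` generated by `G`: the smallest
subset of `M` containing `zM`, `pM` and `G` that is closed under `m`. -/
inductive GenM {M : Type*} (m : M → M → M) (pM zM : M) (G : Set M) : M → Prop
  | zero : GenM m pM zM G zM
  | p : GenM m pM zM G pM
  | base {a : M} : a ∈ G → GenM m pM zM G a
  | mul {a b : M} : GenM m pM zM G a → GenM m pM zM G b → GenM m pM zM G (m a b)

/-- The variety `V` is locally finite: in any algebra satisfying the four laws, the
subalgebra generated by an `n`-element set is finite with at most
`1 + (n+1)·2^(n+1)` elements. -/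
theorem stmt_4 {M : Type*} (m : M → M → M) (pM zM : M)
    (law1 : ∀ a : M, m zM a = zM) (law1' : ∀ a : M, m a zM = zM)
    (law2 : ∀ a b c : M, m (m a b) c = m (m a c) b)
    (law3 : ∀ a b c : M, m a (m b c) = zM)
    (law4 : ∀ a b : M, m (m a b) b = zM)
    (G : Set M) (n : ℕ) (hGfin : G.Finite) (hGcard : G.ncard = n) :
    {a : M | GenM m pM zM G a}.Finite ∧
    {a : M | GenM m pM zM G a}.ncard ≤ 1 + (n + 1) * 2 ^ (n + 1) := by
  classical
  -- foldl over permuted lists agree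
  have foldperm : ∀ {l₁ l₂ : List M}, l₁.Perm l₂ → ∀ b : M,
      List.foldl m b l₁ = List.foldl m b l₂ := by
    intro l₁ l₂ p b
    exact p.foldl_eq' (fun x _ y _ z => law2 z x y) b
  set Gs : Finset M := hGfin.toFinset with hGs
  set As : Finset M := insert pM Gs with hAs
  set T : Finset M :=
    insert zM ((As ×ˢ As.powerset).image fun q => List.foldl m q.1 q.2.toList) with hT
  -- key: foldl over a finset with an element appended
  have key_mem : ∀ (x y : M) (s : Finset M), y ∈ s →
      m (List.foldl m x (s.toList)) y = zM := by
    intro x y s hy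
    have hperm : s.toList.Perm (y :: (s.erase y).toList) := by
      conv_lhs => rw [← Finset.insert_erase hy]
      exact Finset.toList_insert (Finset.notMem_erase y s)
    have hperm2 : s.toList.Perm ((s.erase y).toList ++ [y]) :=
      hperm.trans (List.perm_append_singleton y _).symm
    rw [foldperm hperm2 x, List.foldl_append]
    simpa using law4 _ y
  have key_notmem : ∀ (x y : M) (s : Finset M), y ∉ s →
      m (List.foldl m x (s.toList)) y = List.foldl m x ((insert y s).toList) := by
    intro x y s hy
    have hperm : (insert y s).toList.Perm (s.toList ++ [y]) :=
      (Finset.toList_insert hy).trans (List.perm_append_singleton y s.toList).symm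
    rw [foldperm hperm x, List.foldl_append]
    simp
  -- every generated element is in T
  have main : ∀ a : M, GenM m pM zM G a → a ∈ T := by
    intro a ha
    induction ha with
    | zero => exact Finset.mem_insert_self _ _
    | p =>
      apply Finset.mem_insert_of_mem
      apply Finset.mem_image.mpr
      exact ⟨(pM, ∅), by simp [hAs], by simp⟩
    | @base a hg =>
      apply Finset.mem_insert_of_mem
      apply Finset.mem_image.mpr
      exact ⟨(a, ∅), by simp [hAs, hGs, hg], by simp⟩
    | @mul a b ha hb iha ihb =>
      rcases Finset.mem_insert.mp iha with rfl | iha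
      · rw [law1]; exact Finset.mem_insert_self _ _
      rcases Finset.mem_insert.mp ihb with rfl | ihb
      · rw [law1']; exact Finset.mem_insert_self _ _
      obtain ⟨⟨x, s⟩, hxs, rfl⟩ := Finset.mem_image.mp iha
      obtain ⟨⟨y, t⟩, hyt, rfl⟩ := Finset.mem_image.mp ihb
      simp only [Finset.mem_product, Finset.mem_powerset] at hxs hyt
      rcases eq_or_ne t ∅ with rfl | htne
      · -- b = y, an atom
        simp only [Finset.toList_empty, List.foldl_nil]
        by_cases hys : y ∈ s
        · rw [key_mem x y s hys]; exact Finset.mem_insert_self _ _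
        · rw [key_notmem x y s hys]
          apply Finset.mem_insert_of_mem
          apply Finset.mem_image.mpr
          exact ⟨(x, insert y s), by
            simp only [Finset.mem_product, Finset.mem_powerset]
            exact ⟨hxs.1, Finset.insert_subset hyt.1 hxs.2⟩, rfl⟩
      · -- t nonempty: b is a product, so result is zM
        have : t.toList ≠ [] := by simpa using htne
        rcases t.toList.eq_nil_or_concat with h | ⟨L, z, hLz⟩
        · exact absurd h this
        rw [hLz, List.concat_eq_append, List.foldl_append]
        simp only [List.foldl_cons, List.foldl_nil]
        rw [law3]
        exact Finset.mem_insert_self _ _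
  have hsub : {a : M | GenM m pM zM G a} ⊆ ↑T := fun a ha => main a ha
  have hfin : {a : M | GenM m pM zM G a}.Finite := Set.Finite.subset T.finite_toSet hsub
  refine ⟨hfin, ?_⟩
  have h1 : {a : M | GenM m pM zM G a}.ncard ≤ T.card := by
    calc {a : M | GenM m pM zM G a}.ncard ≤ (↑T : Set M).ncard :=
          Set.ncard_le_ncard hsub T.finite_toSet
      _ = T.card := Set.ncard_coe_finset T
  refine h1.trans ?_
  have hAcard : As.card ≤ n + 1 := by
    calc As.card ≤ Gs.card + 1 := Finset.card_insert_le _ _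
      _ = n + 1 := by
          have : Gs.card = n := by
            rw [hGs, ← Set.ncard_eq_toFinset_card G hGfin, hGcard]
          omega
  calc T.card ≤ ((As ×ˢ As.powerset).image fun q => List.foldl m q.1 q.2.toList).card + 1 :=
        Finset.card_insert_le _ _
    _ ≤ (As ×ˢ As.powerset).card + 1 := by
        exact Nat.add_le_add_right (Finset.card_image_le) 1
    _ = As.card * 2 ^ As.card + 1 := by
        rw [Finset.card_product, Finset.card_powerset]
    _ ≤ (n + 1) * 2 ^ (n + 1) + 1 := by
        exact Nat.add_le_add_right
          (Nat.mul_le_mul hAcard (Nat.pow_le_pow_right (by norm_num) hAcard)) 1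
    _ = 1 + (n + 1) * 2 ^ (n + 1) := by ring
end

section
/- Let φ : F → F be any endomorphism of F, i.e., a map with φ(a * b) = φ(a) * φ(b) for all a, b ∈ F, φ(0) = 0, and φ(p) = p. Then for every word w = (p, Y) ∈ F whose first component is the letter p, either φ(w) = 0 or φ(w) is a word (p, Y') whose first component is p and with |Y'| = |Y| (i.e., φ(w) has the same length as w). -/
/-- Any endomorphism of `F` sends a word starting with `p` either to `0` or to a
word starting with `p` of the same length. -/
theorem stmt_6 (φ : F → F)
    (hmul : ∀ a b : F, φ (F.mul a b) = F.mul (φ a) (φ b))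
    (hzero : φ F.zero = F.zero) (hp : φ F.p = F.p)
    (Y : {Y : Finset Letter // Y.Nonempty}) :
    φ (F.word none Y) = F.zero ∨
      ∃ Y' : {Y : Finset Letter // Y.Nonempty},
        φ (F.word none Y) = F.word none Y' ∧ Y'.1.card = Y.1.card := by
  suffices h : ∀ (S : Finset Letter) (hS : S.Nonempty),
      φ (F.word none ⟨S, hS⟩) = F.zero ∨
      ∃ Y' : {Y : Finset Letter // Y.Nonempty},
        φ (F.word none ⟨S, hS⟩) = F.word none Y' ∧ Y'.1.card = S.card by
    obtain ⟨Y, hY⟩ := Y; exact h Y hY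
  intro S
  induction S using Finset.induction_on with
  | empty => intro h; simp at h
  | @insert a S ha ih =>
    intro _
    rcases S.eq_empty_or_nonempty with rfl | hS
    · -- singleton case: word none {a} = p * letter a
      have key : F.word none ⟨insert a (∅ : Finset Letter), by simp⟩
          = F.mul F.p (F.letter a) := by
        simp [F.mul, F.p]
      rw [show (⟨insert a (∅ : Finset Letter), Finset.insert_nonempty a ∅⟩ :
            {Y : Finset Letter // Y.Nonempty}) = ⟨insert a ∅, by simp⟩ from rfl,
          key, hmul, hp]
      cases hφ : φ (F.letter a) with
      | zero => left; simp [F.mul, F.p]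
      | letter z =>
          right
          exact ⟨⟨{z}, Finset.singleton_nonempty z⟩, rfl, by simp⟩
      | word w W => left; simp [F.mul, F.p]
    · have key : F.word none ⟨insert a S, Finset.insert_nonempty a S⟩
          = F.mul (F.word none ⟨S, hS⟩) (F.letter a) := by
        simp [F.mul, ha]
      rw [key, hmul]
      rcases ih hS with h0 | ⟨⟨Y', hY'⟩, heq, hcard⟩
      · left; rw [h0]; cases φ (F.letter a) <;> rfl
      · rw [heq]
        cases hφ : φ (F.letter a) with
        | zero => left; rfl
        | letter z =>
            by_cases hz : z ∈ Y'
            · left; simp [F.mul, hz]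
            · right
              refine ⟨⟨insert z Y', Finset.insert_nonempty z Y'⟩, by simp [F.mul, hz], ?_⟩
              simp [Finset.card_insert_of_notMem hz, Finset.card_insert_of_notMem ha, hcard]
        | word w W => left; rfl
end

section
/- The variety V has uncountably many term clones: the collection of subsets T ⊆ F such that T contains every generator xᵢ and T is closed under substitution (for every endomorphism φ : F → F with φ(a * b) = φ(a) * φ(b), φ(0) = 0, φ(p) = p, and φ(xᵢ) ∈ T for all i, one has φ(t) ∈ T for all t ∈ T) has cardinality at least 2^ℵ₀; in particular it is uncountable. -/
/-- A term clone of `V`, viewed as a subset of the free algebra `F`: it contains all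
generators `xᵢ` and is closed under substitution (i.e., under every endomorphism of
`F` mapping all generators into it). -/
def IsTermClone (T : Set F) : Prop :=
  (∀ i : ℕ, F.x i ∈ T) ∧
  ∀ φ : F → F, (∀ a b : F, φ (F.mul a b) = F.mul (φ a) (φ b)) →
    φ F.zero = F.zero → φ F.p = F.p → (∀ i : ℕ, φ (F.x i) ∈ T) →
    ∀ t ∈ T, φ t ∈ T

namespace CloneAux

/-- The clone associated to `S ⊆ ℕ`: zero, all letters, and words whose head letter
is `p` and whose size `k` satisfies `k - 1 ∈ S`. -/
def TS (S : Set ℕ) : Set F :=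
  {t | match t with
    | F.zero => True
    | F.letter _ => True
    | F.word l Y => l = none ∧ Y.1.card - 1 ∈ S}

lemma zero_mul (a : F) : F.mul F.zero a = F.zero := by cases a <;> rfl

lemma zero_mem (S : Set ℕ) : F.zero ∈ TS S := by trivial

lemma letter_mem (S : Set ℕ) (l : Letter) : F.letter l ∈ TS S := by trivial

lemma word_mem_iff (S : Set ℕ) (l : Letter) (Y : {Y : Finset Letter // Y.Nonempty}) :
    F.word l Y ∈ TS S ↔ l = none ∧ Y.1.card - 1 ∈ S := Iff.rfl

lemma decomp (Y : {Y : Finset Letter // Y.Nonempty}) (y : Letter) (h : y ∈ Y.1) (h2 : (Y.1.erase y).Nonempty) :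
    F.word none Y = F.mul (F.word none ⟨Y.1.erase y, h2⟩) (F.letter y) := by
  have hy : y ∉ Y.1.erase y := Finset.notMem_erase y Y.1
  simp only [F.mul, if_neg hy]
  congr 1
  exact Subtype.ext (by simp [Finset.insert_erase h])

/-- Key structural lemma: any multiplicative endomorphism fixing `p` sends a word with
head `p` and size `n` to zero or to a word with head `p` and size `n`. -/
lemma key (φ : F → F) (hm : ∀ a b, φ (F.mul a b) = F.mul (φ a) (φ b))
    (hp : φ F.p = F.p) :
    ∀ n (Y : {Y : Finset Letter // Y.Nonempty}), Y.1.card = n →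
      φ (F.word none Y) = F.zero ∨
      ∃ Z, φ (F.word none Y) = F.word none Z ∧ Z.1.card = n := by
  intro n
  induction n with
  | zero => intro Y h; exact absurd (Finset.card_eq_zero.mp h) Y.2.ne_empty
  | succ n ih =>
    intro Y h
    rcases Nat.eq_zero_or_pos n with hn | hn
    · -- card = 1
      subst hn
      obtain ⟨a, ha⟩ := Finset.card_eq_one.mp h
      have hYa : Y = ⟨{a}, Finset.singleton_nonempty a⟩ := Subtype.ext ha
      subst hYa
      have : F.word none ⟨{a}, Finset.singleton_nonempty a⟩ = F.mul F.p (F.letter a) := rfl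
      rw [this, hm, hp]
      cases hb : φ (F.letter a) with
      | zero => left; rfl
      | letter z => right; exact ⟨⟨{z}, Finset.singleton_nonempty z⟩, rfl, rfl⟩
      | word _ _ => left; rfl
    · -- card = n+1 ≥ 2
      obtain ⟨y, hy⟩ := Y.2
      have h2 : (Y.1.erase y).Nonempty := by
        rw [← Finset.card_pos, Finset.card_erase_of_mem hy, h]; omega
      rw [decomp Y y hy h2, hm]
      have hcard : (Y.1.erase y).card = n := by
        rw [Finset.card_erase_of_mem hy, h]; omega
      rcases ih ⟨Y.1.erase y, h2⟩ hcard with h0 | ⟨Z, hZ, hZc⟩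
      · left; rw [h0]; exact zero_mul _
      · rw [hZ]
        cases hb : φ (F.letter y) with
        | zero => left; rfl
        | letter z =>
          by_cases hz : z ∈ Z.1
          · left; simp [F.mul, hz]
          · right
            refine ⟨⟨insert z Z.1, Finset.insert_nonempty z Z.1⟩, ?_, ?_⟩
            · simp [F.mul, hz]
            · simp [Finset.card_insert_of_notMem hz, hZc]
        | word _ _ => left; rfl

lemma isTermClone_TS (S : Set ℕ) : IsTermClone (TS S) := by
  refine ⟨fun i => letter_mem S _, ?_⟩
  intro φ hm h0 hp hgen t ht
  cases t with
  | zero => rw [h0]; exact zero_mem S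
  | letter l =>
    cases l with
    | none => rw [show F.letter none = F.p from rfl, hp]; exact letter_mem S none
    | some i => exact hgen i
  | word l Y =>
    obtain ⟨hl, hc⟩ := (word_mem_iff S l Y).mp ht
    subst hl
    rcases key φ hm hp Y.1.card Y rfl with h | ⟨Z, hZ, hZc⟩
    · rw [h]; exact zero_mem S
    · rw [hZ]; exact (word_mem_iff S none Z).mpr ⟨rfl, by rw [hZc]; exact hc⟩

/-- A canonical finset of letters of size `k + 1`. -/
def canon (k : ℕ) : {Y : Finset Letter // Y.Nonempty} :=
  ⟨(Finset.range (k + 1)).image (fun i => (some i : Letter)),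
    ⟨some 0, Finset.mem_image.mpr ⟨0, Finset.mem_range.mpr (Nat.succ_pos k), rfl⟩⟩⟩

lemma canon_card (k : ℕ) : (canon k).1.card = k + 1 := by
  rw [show (canon k).1 = (Finset.range (k + 1)).image (fun i => (some i : Letter)) from rfl,
    Finset.card_image_of_injective _ (fun a b h => Option.some.inj h), Finset.card_range]

lemma TS_injective : Function.Injective TS := by
  intro S S' h
  ext k
  have := Set.ext_iff.mp h (F.word none (canon k))
  simpa [word_mem_iff, canon_card] using this

end CloneAux

/-- The variety `V` has at least continuum many term clones; in particular,
uncountably many. -/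
theorem stmt_10 :
    Cardinal.continuum ≤ Cardinal.mk {T : Set F // IsTermClone T} ∧
    ¬ {T : Set F | IsTermClone T}.Countable := by
  have hinj : Function.Injective
      (fun S : Set ℕ => (⟨CloneAux.TS S, CloneAux.isTermClone_TS S⟩ :
        {T : Set F // IsTermClone T})) := by
    intro S S' h
    exact CloneAux.TS_injective (congrArg Subtype.val h)
  have hle : Cardinal.continuum ≤ Cardinal.mk {T : Set F // IsTermClone T} := by
    have h1 : Cardinal.mk (Set ℕ) ≤ Cardinal.mk {T : Set F // IsTermClone T} :=
      Cardinal.mk_le_of_injective hinj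
    have h2 : Cardinal.mk (Set ℕ) = Cardinal.continuum := by
      simp [Cardinal.mk_set, Cardinal.mk_nat, Cardinal.two_power_aleph0]
    rwa [h2] at h1
  refine ⟨hle, fun hcount => ?_⟩
  have : Cardinal.mk {T : Set F // IsTermClone T} ≤ Cardinal.aleph0 := by
    have hc : Countable {T : Set F // IsTermClone T} := hcount.to_subtype
    exact Cardinal.mk_le_aleph0
  exact absurd (hle.trans this) (by simp [Cardinal.aleph0_lt_continuum.not_ge])
end

section
/- The subalgebra of F generated by the single generator x₁ (the smallest subset of F containing 0, p, x₁ and closed under *) equals the 9-element set {0, p, x₁, (p,{p}), (p,{x₁}), (x₁,{p}), (x₁,{x₁}), (x₁,{x₁,p}), (p,{p,x₁})}, i.e., {0, p, x, p*p, p*x, x*p, x*x, x*x*p, p*p*x} where x = x₁ and products associate to the left; in particular x*x*p = x*p*x and p*p*x = p*x*p in F. -/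
deriving instance DecidableEq for F

namespace F

def e1 : F := F.word none ⟨{none}, Finset.singleton_nonempty none⟩
def e2 : F := F.word none ⟨{some 1}, Finset.singleton_nonempty (some 1)⟩
def e3 : F := F.word (some 1) ⟨{none}, Finset.singleton_nonempty none⟩
def e4 : F := F.word (some 1) ⟨{some 1}, Finset.singleton_nonempty (some 1)⟩
def e5 : F := F.word (some 1) ⟨{some 1, none}, Finset.insert_nonempty _ _⟩
def e6 : F := F.word none ⟨{none, some 1}, Finset.insert_nonempty _ _⟩

lemma word_ext (a : Letter) {Y Z : Finset Letter} (hY : Y.Nonempty) (hZ : Z.Nonempty)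
    (h : Y = Z) : F.word a ⟨Y, hY⟩ = F.word a ⟨Z, hZ⟩ := by subst h; rfl

lemma mul_e4_p : F.mul F.e4 F.p = F.e5 :=
  (rfl : F.mul F.e4 F.p = F.word (some 1) ⟨insert none {some 1}, Finset.insert_nonempty _ _⟩).trans
    (word_ext _ _ _ (Finset.pair_comm _ _))

lemma mul_e1_x : F.mul F.e1 (F.x 1) = F.e6 :=
  (rfl : F.mul F.e1 (F.x 1) = F.word none ⟨insert (some 1) {none}, Finset.insert_nonempty _ _⟩).trans
    (word_ext _ _ _ (Finset.pair_comm _ _))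

/-- The 9-element set as a `Finset`. -/
def L : Finset F := {F.zero, F.p, F.x 1, F.e1, F.e2, F.e3, F.e4, F.e5, F.e6}

/-- The 9-element set in word form. -/
def T : Set F := ({F.zero, F.p, F.x 1, F.e1, F.e2, F.e3, F.e4, F.e5, F.e6} : Set F)

lemma hT0 : F.zero ∈ T := by simp [T]
lemma hT1 : F.p ∈ T := by simp [T]
lemma hT2 : F.x 1 ∈ T := by simp [T]
lemma hT3 : F.e1 ∈ T := by simp [T]
lemma hT4 : F.e2 ∈ T := by simp [T]
lemma hT5 : F.e3 ∈ T := by simp [T]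
lemma hT6 : F.e4 ∈ T := by simp [T]
lemma hT7 : F.e5 ∈ T := by simp [T]
lemma hT8 : F.e6 ∈ T := by simp [T]

lemma T_closed : ∀ a ∈ T, ∀ b ∈ T, F.mul a b ∈ T := by
  intro a ha b hb
  simp only [T, Set.mem_insert_iff, Set.mem_singleton_iff] at ha hb
  rcases ha with rfl | rfl | rfl | rfl | rfl | rfl | rfl | rfl | rfl <;>
    rcases hb with rfl | rfl | rfl | rfl | rfl | rfl | rfl | rfl | rfl <;>
    first
      | exact hT0 | exact hT1 | exact hT2 | exact hT3 | exact hT4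
      | exact hT5 | exact hT6 | exact hT7 | exact hT8
      | (rw [mul_e4_p]; exact hT7)
      | (rw [mul_e1_x]; exact hT8)

lemma gen_eq_T : {a : F | Gen ({F.x 1} : Set F) a} = T := by
  ext a
  constructor
  · intro ha
    induction ha with
    | zero => exact hT0
    | p => exact hT1
    | base h => rw [Set.mem_singleton_iff.mp h]; exact hT2
    | mul _ _ iha ihb => exact T_closed _ iha _ ihb
  · intro ha
    simp only [T, Set.mem_insert_iff, Set.mem_singleton_iff] at ha
    have gx : Gen ({F.x 1} : Set F) (F.x 1) := Gen.base rfl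
    have gp : Gen ({F.x 1} : Set F) F.p := Gen.p
    rcases ha with rfl | rfl | rfl | rfl | rfl | rfl | rfl | rfl | rfl
    · exact Gen.zero
    · exact Gen.p
    · exact gx
    · exact Gen.mul gp gp
    · exact Gen.mul gp gx
    · exact Gen.mul gx gp
    · exact Gen.mul gx gx
    · have : F.mul (F.mul (F.x 1) (F.x 1)) F.p = F.e5 := mul_e4_p
      exact this ▸ Gen.mul (Gen.mul gx gx) Gen.p
    · have : F.mul (F.mul F.p F.p) (F.x 1) = F.e6 := mul_e1_x
      exact this ▸ Gen.mul (Gen.mul Gen.p Gen.p) gx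

lemma T_eq_coe_L : T = (↑L : Set F) := by simp [T, L]

end F

/-- The subalgebra of `F` generated by `x₁` is the 9-element set
`{0, p, x, p*p, p*x, x*p, x*x, x*x*p, p*p*x}` (products associating to the left);
in particular `x*x*p = x*p*x` and `p*p*x = p*x*p`. -/
theorem stmt_11 :
    {a : F | Gen ({F.x 1} : Set F) a} =
      ({F.zero, F.p, F.x 1, F.mul F.p F.p, F.mul F.p (F.x 1), F.mul (F.x 1) F.p,
        F.mul (F.x 1) (F.x 1), F.mul (F.mul (F.x 1) (F.x 1)) F.p,
        F.mul (F.mul F.p F.p) (F.x 1)} : Set F) ∧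
    ({F.zero, F.p, F.x 1, F.mul F.p F.p, F.mul F.p (F.x 1), F.mul (F.x 1) F.p,
        F.mul (F.x 1) (F.x 1), F.mul (F.mul (F.x 1) (F.x 1)) F.p,
        F.mul (F.mul F.p F.p) (F.x 1)} : Set F) =
      ({F.zero, F.p, F.x 1,
        F.word none ⟨{none}, Finset.singleton_nonempty none⟩,
        F.word none ⟨{some 1}, Finset.singleton_nonempty (some 1)⟩,
        F.word (some 1) ⟨{none}, Finset.singleton_nonempty none⟩,
        F.word (some 1) ⟨{some 1}, Finset.singleton_nonempty (some 1)⟩,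
        F.word (some 1) ⟨{some 1, none}, Finset.insert_nonempty _ _⟩,
        F.word none ⟨{none, some 1}, Finset.insert_nonempty _ _⟩} : Set F) ∧
    {a : F | Gen ({F.x 1} : Set F) a}.ncard = 9 ∧
    F.mul (F.mul (F.x 1) (F.x 1)) F.p = F.mul (F.mul (F.x 1) F.p) (F.x 1) ∧
    F.mul (F.mul F.p F.p) (F.x 1) = F.mul (F.mul F.p (F.x 1)) F.p := by
  have h5 : F.mul (F.mul (F.x 1) (F.x 1)) F.p = F.e5 := F.mul_e4_p
  have h6 : F.mul (F.mul F.p F.p) (F.x 1) = F.e6 := F.mul_e1_x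
  have eq2 : ({F.zero, F.p, F.x 1, F.mul F.p F.p, F.mul F.p (F.x 1), F.mul (F.x 1) F.p,
        F.mul (F.x 1) (F.x 1), F.mul (F.mul (F.x 1) (F.x 1)) F.p,
        F.mul (F.mul F.p F.p) (F.x 1)} : Set F) = F.T := by
    rw [h5, h6]; rfl
  have eq2' : F.T = ({F.zero, F.p, F.x 1,
        F.word none ⟨{none}, Finset.singleton_nonempty none⟩,
        F.word none ⟨{some 1}, Finset.singleton_nonempty (some 1)⟩,
        F.word (some 1) ⟨{none}, Finset.singleton_nonempty none⟩,
        F.word (some 1) ⟨{some 1}, Finset.singleton_nonempty (some 1)⟩,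
        F.word (some 1) ⟨{some 1, none}, Finset.insert_nonempty _ _⟩,
        F.word none ⟨{none, some 1}, Finset.insert_nonempty _ _⟩} : Set F) := rfl
  refine ⟨F.gen_eq_T.trans eq2.symm, eq2.trans eq2', ?_, h5.trans ?_, h6.trans ?_⟩
  · rw [F.gen_eq_T, F.T_eq_coe_L, Set.ncard_coe_finset]
    rfl
  · exact ((rfl : F.mul (F.mul (F.x 1) F.p) (F.x 1)
      = F.word (some 1) ⟨insert (some 1) {none}, Finset.insert_nonempty _ _⟩)).symm
  · exact ((rfl : F.mul (F.mul F.p (F.x 1)) F.p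
      = F.word none ⟨insert none {some 1}, Finset.insert_nonempty _ _⟩)).symm
end
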